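/- The map 𝔥 : 𝐈ℕ∞ → 𝐈ℕ∞ sending each η ∈ 𝐈ℕ∞ to the restriction of η to the tail { n ∈ ℕ : n ≥ n_η^d }, where n_η^d is the least positive integer such that every n ≥ n_η^d lies in dom η, is a monoid homomorphism whose image is the submonoid 𝒞_ℕ; in particular 𝔥 is a surjective homomorphism onto 𝒞_ℕ that fixes every element of 𝒞_ℕ, so 𝒞_ℕ is a homomorphic retract of 𝐈ℕ∞. -/

import Mathlib

/-- Partial transformations of the set ℕ of positive integers. -/
abbrev PMapN : Type := ℕ+ → Option ℕ+

/-- The domain of a partial transformation. -/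
def pdom (f : PMapN) : Set ℕ+ := {n | f n ≠ none}

/-- The range of a partial transformation. -/
def pran (f : PMapN) : Set ℕ+ := {m | ∃ n, f n = some m}

/-- Composition of partial transformations: `pmul f g` applies `g` first and then `f`. -/
def pmul (f g : PMapN) : PMapN := fun n => (g n).bind f

/-- The identity transformation 𝕀 of ℕ. -/
def pid : PMapN := fun n => some n

/-- `f` is a partial bijection (an injective partial map). -/
def IsPartialBij (f : PMapN) : Prop :=
  ∀ ⦃m n a⦄, f m = some a → f n = some a → m = n

/-- `f` is a partial isometry with respect to the metric `d(m, n) = |m - n|`. -/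
def IsIsometry (f : PMapN) : Prop :=
  ∀ ⦃m n a b⦄, f m = some a → f n = some b →
    |((a : ℕ) : ℤ) - ((b : ℕ) : ℤ)| = |((m : ℕ) : ℤ) - ((n : ℕ) : ℤ)|

/-- Membership in the inverse monoid `𝐈ℕ∞` of partial cofinite isometries of ℕ:
a partial bijection of ℕ with cofinite domain and cofinite range preserving distances. -/
def InIN (f : PMapN) : Prop :=
  IsPartialBij f ∧ (pdom f)ᶜ.Finite ∧ (pran f)ᶜ.Finite ∧ IsIsometry f

/-- The partial translation `α₀ : n ↦ n + 1` with domain ℕ. -/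
def alpha0 : PMapN := fun n => some (n + 1)

/-- The partial translation `β₀ : n ↦ n - 1` with domain `ℕ \ {1}`. -/
def beta0 : PMapN := fun n => if n = 1 then none else some (n - 1)

/-- Membership in the submonoid `𝒞_ℕ` of `𝐈ℕ∞` generated by `α₀` and `β₀`
(isomorphic to the bicyclic monoid). -/
inductive InC : PMapN → Prop
  | one : InC pid
  | base_a : InC alpha0
  | base_b : InC beta0
  | mul : ∀ f g, InC f → InC g → InC (pmul f g)

/-- The retraction `𝔥 : 𝐈ℕ∞ → 𝒞_ℕ` sending `η` to its restriction to the tail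
`{n : n ≥ n_η^d}`, where `n_η^d` is the least number such that every `n ≥ n_η^d`
lies in `dom η`. -/
noncomputable def hmap (η : PMapN) : PMapN := fun n =>
  if sInf {N : ℕ | ∀ m : ℕ+, N ≤ (m : ℕ) → η m ≠ none} ≤ (n : ℕ) then η n else none

-- ===== auxiliary =====

def tset (η : PMapN) : Set ℕ := {N : ℕ | ∀ m : ℕ+, N ≤ (m : ℕ) → η m ≠ none}

lemma hmap_def (η : PMapN) (n : ℕ+) :
    hmap η n = if sInf (tset η) ≤ (n : ℕ) then η n else none := rfl

lemma exists_big_not_mem {S : Set ℕ+} (hS : S.Finite) (K : ℕ) :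
    ∃ q : ℕ+, K ≤ (q : ℕ) ∧ q ∉ S := by
  obtain ⟨B, hB⟩ := hS.bddAbove
  refine ⟨⟨(B : ℕ) + K + 1, by omega⟩, by show K ≤ (B:ℕ)+K+1; omega, fun hq => ?_⟩
  have h2 : ((⟨(B : ℕ) + K + 1, by omega⟩ : ℕ+) : ℕ) ≤ (B : ℕ) := hB hq
  revert h2; show (B:ℕ)+K+1 ≤ (B:ℕ) → False; omega

lemma tset_nonempty {η : PMapN} (h : InIN η) : (tset η).Nonempty := by
  obtain ⟨B, hB⟩ := h.2.1.bddAbove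
  refine ⟨(B : ℕ) + 1, fun m hm hmn => ?_⟩
  have : m ∈ (pdom η)ᶜ := fun hc => hc hmn
  have hle := hB this
  have : (m : ℕ) ≤ (B : ℕ) := hle
  omega

lemma shift_exists {η : PMapN} (h : InIN η) :
    ∃ c : ℤ, ∀ ⦃n a⦄, η n = some a → ((a : ℕ) : ℤ) = ((n : ℕ) : ℤ) + c := by
  obtain ⟨n₀, hn₀big, hn₀⟩ := exists_big_not_mem h.2.1 0
  simp only [Set.mem_compl_iff, pdom, Set.mem_setOf_eq, not_not] at hn₀
  obtain ⟨a₀, ha₀⟩ := Option.ne_none_iff_exists'.mp hn₀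
  refine ⟨(a₀ : ℕ) - (n₀ : ℕ), fun n a ha => ?_⟩
  obtain ⟨q, hqbig, hq⟩ := exists_big_not_mem h.2.1
    ((a : ℕ) + (n : ℕ) + (a₀ : ℕ) + (n₀ : ℕ) + 1)
  simp only [Set.mem_compl_iff, pdom, Set.mem_setOf_eq, not_not] at hq
  obtain ⟨b, hb⟩ := Option.ne_none_iff_exists'.mp hq
  have h1 := h.2.2.2 hb ha
  have h2 := h.2.2.2 hb ha₀
  have e1 := abs_eq_abs.mp h1
  have e2 := abs_eq_abs.mp h2
  have pa : 1 ≤ (a : ℕ) := a.2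
  have pb : 1 ≤ (b : ℕ) := b.2
  have pa0 : 1 ≤ (a₀ : ℕ) := a₀.2
  have pn : 1 ≤ (n : ℕ) := n.2
  have pn0 : 1 ≤ (n₀ : ℕ) := n₀.2
  push_cast at e1 e2 ⊢
  omega

def apow : ℕ → PMapN
  | 0 => pid
  | j+1 => pmul alpha0 (apow j)

def bpow : ℕ → PMapN
  | 0 => pid
  | k+1 => pmul beta0 (bpow k)

lemma inC_apow (j : ℕ) : InC (apow j) := by
  induction j with
  | zero => exact InC.one
  | succ j ih => exact InC.mul _ _ InC.base_a ih

lemma inC_bpow (k : ℕ) : InC (bpow k) := by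
  induction k with
  | zero => exact InC.one
  | succ k ih => exact InC.mul _ _ InC.base_b ih

lemma apow_spec (j : ℕ) (n : ℕ+) : ∃ p : ℕ+, apow j n = some p ∧ (p : ℕ) = (n : ℕ) + j := by
  induction j with
  | zero => exact ⟨n, rfl, rfl⟩
  | succ j ih =>
    obtain ⟨p, hp, hpv⟩ := ih
    refine ⟨p + 1, ?_, ?_⟩
    · show (apow j n).bind alpha0 = _
      rw [hp]; rfl
    · push_cast; omega

lemma bpow_some (k : ℕ) (n : ℕ+) (h : k < (n : ℕ)) :
    ∃ p : ℕ+, bpow k n = some p ∧ (p : ℕ) + k = (n : ℕ) := by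
  induction k with
  | zero => exact ⟨n, rfl, rfl⟩
  | succ k ih =>
    obtain ⟨p, hp, hpv⟩ := ih (by omega)
    have hp1 : 1 < (p : ℕ) := by omega
    refine ⟨p - 1, ?_, ?_⟩
    · show (bpow k n).bind beta0 = _
      rw [hp]
      show beta0 p = _
      rw [beta0, if_neg (by intro h1; subst h1; simp at hp1)]
    · rw [PNat.sub_coe, if_pos (show (1:ℕ+) < p by exact_mod_cast hp1)]
      simp; omega

lemma bpow_none (k : ℕ) (n : ℕ+) (h : (n : ℕ) ≤ k) : bpow k n = none := by
  induction k with
  | zero => exact absurd h (by have := n.pos; omega)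
  | succ k ih =>
    show (bpow k n).bind beta0 = none
    rcases Nat.lt_or_ge k (n : ℕ) with hk | hk
    · obtain ⟨p, hp, hpv⟩ := bpow_some k n hk
      have : p = 1 := by
        have : (p : ℕ) = 1 := by omega
        exact PNat.coe_injective this
      rw [hp, this]
      show beta0 1 = none
      rw [beta0, if_pos rfl]
    · rw [ih hk]; rfl

def Canon (k : ℕ) (c : ℤ) (f : PMapN) : Prop :=
  1 ≤ k ∧ 1 ≤ (k : ℤ) + c ∧
  (∀ n : ℕ+, (n : ℕ) < k → f n = none) ∧
  (∀ n : ℕ+, k ≤ (n : ℕ) → ∃ p : ℕ+, f n = some p ∧ ((p : ℕ) : ℤ) = ((n : ℕ) : ℤ) + c)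

lemma inC_of_canon {k : ℕ} {c : ℤ} {f : PMapN} (h : Canon k c f) : InC f := by
  obtain ⟨hk1, hkc, hnone, hsome⟩ := h
  have hf : f = pmul (apow ((k : ℤ) + c - 1).toNat) (bpow (k - 1)) := by
    funext n
    rcases Nat.lt_or_ge (n : ℕ) k with hn | hn
    · rw [hnone n hn]
      show _ = (bpow (k-1) n).bind _
      rw [bpow_none (k-1) n (by omega)]
      rfl
    · obtain ⟨p, hp, hpv⟩ := hsome n hn
      obtain ⟨q, hq, hqv⟩ := bpow_some (k-1) n (by omega)
      obtain ⟨r, hr, hrv⟩ := apow_spec ((k : ℤ) + c - 1).toNat q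
      show _ = (bpow (k-1) n).bind _
      rw [hp, hq]
      show some p = apow _ q
      rw [hr]
      congr 1
      apply PNat.coe_injective
      have h1 : (((k : ℤ) + c - 1).toNat : ℤ) = (k : ℤ) + c - 1 := Int.toNat_of_nonneg (by omega)
      have := n.pos
      omega
  rw [hf]
  exact InC.mul _ _ (inC_apow _) (inC_bpow _)

lemma canon_of_inC {f : PMapN} (h : InC f) : ∃ k c, Canon k c f := by
  induction h with
  | one =>
    exact ⟨1, 0, le_refl _, by norm_num, fun n hn => by have := n.pos; omega,
      fun n hn => ⟨n, rfl, by omega⟩⟩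
  | base_a =>
    exact ⟨1, 1, le_refl _, by norm_num, fun n hn => by have := n.pos; omega,
      fun n hn => ⟨n + 1, rfl, by push_cast; ring⟩⟩
  | base_b =>
    refine ⟨2, -1, by norm_num, by norm_num, fun n hn => ?_, fun n hn => ?_⟩
    · have hn1 : (n : ℕ) = 1 := by have := n.pos; omega
      have : n = 1 := PNat.coe_injective (by rw [PNat.one_coe]; exact hn1)
      subst this
      rw [beta0, if_pos rfl]
    · have h1 : n ≠ 1 := by intro h1; subst h1; simp at hn
      refine ⟨n - 1, by rw [beta0, if_neg h1], ?_⟩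
      have hn1 : 1 < (n : ℕ) := by omega
      rw [PNat.sub_coe, if_pos (show (1:ℕ+) < n by exact_mod_cast hn1)]
      push_cast; omega
  | mul f g _ _ ihf ihg =>
    obtain ⟨k₁, c₁, hk₁, hkc₁, hnone₁, hsome₁⟩ := ihf
    obtain ⟨k₂, c₂, hk₂, hkc₂, hnone₂, hsome₂⟩ := ihg
    refine ⟨max k₂ ((k₁ : ℤ) - c₂).toNat, c₁ + c₂, le_trans hk₂ (le_max_left _ _), ?_,
      fun n hn => ?_, fun n hn => ?_⟩
    · have h1 : ((k₁ : ℤ) - c₂).toNat ≤ max k₂ ((k₁ : ℤ) - c₂).toNat := le_max_right _ _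
      have h2 : (k₂ : ℤ) ≤ max k₂ ((k₁ : ℤ) - c₂).toNat := by exact_mod_cast le_max_left _ _
      have h3 : (k₁ : ℤ) - c₂ ≤ (((k₁ : ℤ) - c₂).toNat : ℤ) := Int.self_le_toNat _
      have h4 : ((((k₁:ℤ) - c₂).toNat : ℕ) : ℤ) ≤ ((max k₂ ((k₁ : ℤ) - c₂).toNat : ℕ) : ℤ) := by
        exact_mod_cast h1
      omega
    · show (g n).bind f = none
      rcases Nat.lt_or_ge (n : ℕ) k₂ with hn2 | hn2
      · rw [hnone₂ n hn2]; rfl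
      · obtain ⟨p, hp, hpv⟩ := hsome₂ n hn2
        rw [hp]
        show f p = none
        apply hnone₁
        have hlt : (n : ℕ) < ((k₁ : ℤ) - c₂).toNat := by omega
        have hlt' : ((n : ℕ) : ℤ) < ((((k₁ : ℤ) - c₂).toNat : ℕ) : ℤ) := by exact_mod_cast hlt
        omega
    · have hn2 : k₂ ≤ (n : ℕ) := le_trans (le_max_left _ _) hn
      obtain ⟨p, hp, hpv⟩ := hsome₂ n hn2
      have hpk : k₁ ≤ (p : ℕ) := by
        have h1 : ((k₁ : ℤ) - c₂).toNat ≤ (n : ℕ) := le_trans (le_max_right _ _) hn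
        have h3 : (k₁ : ℤ) - c₂ ≤ (((k₁ : ℤ) - c₂).toNat : ℤ) := Int.self_le_toNat _
        have h4 : ((((k₁:ℤ) - c₂).toNat : ℕ) : ℤ) ≤ ((n:ℕ) : ℤ) := by exact_mod_cast h1
        omega
      obtain ⟨q, hq, hqv⟩ := hsome₁ p hpk
      refine ⟨q, ?_, by omega⟩
      show (g n).bind f = some q
      rw [hp]
      exact hq

lemma inIN_of_canon {k : ℕ} {c : ℤ} {f : PMapN} (h : Canon k c f) : InIN f := by
  obtain ⟨hk1, hkc, hnone, hsome⟩ := h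
  refine ⟨?_, ?_, ?_, ?_⟩
  · intro m n a hm hn
    rcases Nat.lt_or_ge (m : ℕ) k with h1 | h1
    · rw [hnone m h1] at hm; exact absurd hm (by simp)
    rcases Nat.lt_or_ge (n : ℕ) k with h2 | h2
    · rw [hnone n h2] at hn; exact absurd hn (by simp)
    obtain ⟨p, hp, hpv⟩ := hsome m h1
    obtain ⟨q, hq, hqv⟩ := hsome n h2
    rw [hp] at hm; rw [hq] at hn
    have hpa : p = a := by injection hm
    have hqa : q = a := by injection hn
    subst hpa; subst hqa
    apply PNat.coe_injective
    omega
  · apply Set.Finite.subset (Set.finite_Iic (⟨k, by omega⟩ : ℕ+))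
    intro n hn
    by_contra hgt
    have hk : k ≤ (n : ℕ) := by
      have hgt' : ¬ (n : ℕ) ≤ k := fun h => hgt (Set.mem_Iic.mpr h)
      omega
    obtain ⟨p, hp, _⟩ := hsome n hk
    exact hn (by show f n ≠ none; rw [hp]; simp)
  · apply Set.Finite.subset (Set.finite_Iic (⟨k + c.natAbs + 1, by omega⟩ : ℕ+))
    intro m hm
    by_contra hgt
    apply hm
    have hmk : (k : ℤ) + c.natAbs + 1 < ((m : ℕ) : ℤ) := by
      have hgt' : ¬ (m : ℕ) ≤ k + c.natAbs + 1 := fun h => hgt (Set.mem_Iic.mpr h)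
      omega
    have h1 : (k : ℤ) ≤ ((m : ℕ) : ℤ) - c := by omega
    have h2 : (1 : ℤ) ≤ ((m : ℕ) : ℤ) - c := by omega
    set nn : ℕ+ := ⟨(((m : ℕ) : ℤ) - c).toNat, by omega⟩ with hnn
    have hcoe : ((nn : ℕ) : ℤ) = ((m : ℕ) : ℤ) - c := by
      show (((((m : ℕ) : ℤ) - c).toNat : ℕ) : ℤ) = _
      omega
    obtain ⟨p, hp, hpv⟩ := hsome nn (by omega)
    refine ⟨nn, ?_⟩
    rw [hp]
    congr 1
    exact PNat.coe_injective (show (p : ℕ) = (m : ℕ) by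
      exact_mod_cast (show ((p : ℕ) : ℤ) = ((m : ℕ) : ℤ) by omega))
  · intro m n a b hm hn
    rcases Nat.lt_or_ge (m : ℕ) k with h1 | h1
    · rw [hnone m h1] at hm; exact absurd hm (by simp)
    rcases Nat.lt_or_ge (n : ℕ) k with h2 | h2
    · rw [hnone n h2] at hn; exact absurd hn (by simp)
    obtain ⟨p, hp, hpv⟩ := hsome m h1
    obtain ⟨q, hq, hqv⟩ := hsome n h2
    rw [hp] at hm; rw [hq] at hn
    have hpa : p = a := by injection hm
    have hqa : q = b := by injection hn
    subst hpa; subst hqa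
    have : ((p : ℕ) : ℤ) - ((q : ℕ) : ℤ) = ((m : ℕ) : ℤ) - ((n : ℕ) : ℤ) := by omega
    rw [this]

lemma hmap_fix_of_canon {k : ℕ} {c : ℤ} {f : PMapN} (h : Canon k c f) : hmap f = f := by
  obtain ⟨hk1, hkc, hnone, hsome⟩ := h
  funext n
  rw [hmap_def]
  split_ifs with ht
  · rfl
  · symm
    by_contra hne
    have hkn : k ≤ (n : ℕ) := by
      by_contra hlt
      exact hne (hnone n (by omega))
    apply ht
    apply Nat.sInf_le
    intro m hm hmn
    obtain ⟨p, hp, _⟩ := hsome m (by omega)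
    rw [hp] at hmn
    exact Option.some_ne_none _ hmn

lemma hmap_canon {η : PMapN} (h : InIN η) :
    ∃ c : ℤ, Canon (max (sInf (tset η)) 1) c (hmap η) := by
  obtain ⟨c, hc⟩ := shift_exists h
  have hmem : sInf (tset η) ∈ tset η := Nat.sInf_mem (tset_nonempty h)
  set t := sInf (tset η) with htdef
  have hsome : ∀ n : ℕ+, max t 1 ≤ (n : ℕ) →
      ∃ p : ℕ+, hmap η n = some p ∧ ((p : ℕ) : ℤ) = ((n : ℕ) : ℤ) + c := by
    intro n hn
    have hd : η n ≠ none := hmem n (by omega)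
    obtain ⟨p, hp⟩ := Option.ne_none_iff_exists'.mp hd
    refine ⟨p, ?_, hc hp⟩
    rw [hmap_def, if_pos (by omega)]
    exact hp
  refine ⟨c, le_max_right _ _, ?_, fun n hn => ?_, hsome⟩
  · set nn : ℕ+ := ⟨max t 1, by omega⟩ with hnn
    have hcoe : (nn : ℕ) = max t 1 := rfl
    obtain ⟨p, _, hpv⟩ := hsome nn (le_of_eq hcoe.symm)
    rw [hcoe] at hpv
    have hp1 : 1 ≤ (p : ℕ) := p.2
    push_cast at hpv ⊢
    omega
  · rw [hmap_def, if_neg (by have := n.pos; omega)]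

lemma hmap_pid : hmap pid = pid := by
  funext n
  rw [hmap_def, if_pos]
  have h0 : (0 : ℕ) ∈ tset pid := fun m _ hm => by simp [pid] at hm
  have := Nat.sInf_le h0
  omega

lemma hmap_mul {η μ : PMapN} (hη : InIN η) (hμ : InIN μ) :
    hmap (pmul η μ) = pmul (hmap η) (hmap μ) := by
  obtain ⟨c, hc⟩ := shift_exists hη
  obtain ⟨d, hd⟩ := shift_exists hμ
  have hμmem : sInf (tset μ) ∈ tset μ := Nat.sInf_mem (tset_nonempty hμ)
  have hηmem : sInf (tset η) ∈ tset η := Nat.sInf_mem (tset_nonempty hη)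
  set tμ := sInf (tset μ) with htμdef
  set tη := sInf (tset η) with htηdef
  -- tset (pmul η μ) is nonempty
  have hcne : (tset (pmul η μ)).Nonempty := by
    refine ⟨max tμ (tη + d.natAbs), fun m hm hmn => ?_⟩
    have h1 : μ m ≠ none := hμmem m (by omega)
    obtain ⟨p, hp⟩ := Option.ne_none_iff_exists'.mp h1
    have hpv := hd hp
    have h2 : η p ≠ none := by
      apply hηmem
      have : ((tη : ℕ) : ℤ) ≤ ((p : ℕ) : ℤ) := by omega
      exact_mod_cast this
    apply h2
    show η p = none
    rw [show (pmul η μ) m = (μ m).bind η from rfl, hp] at hmn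
    exact hmn
  have htmem : sInf (tset (pmul η μ)) ∈ tset (pmul η μ) := Nat.sInf_mem hcne
  set t := sInf (tset (pmul η μ)) with htdef
  have htμt : tμ ≤ t := by
    apply Nat.sInf_le
    intro m hm hmn
    apply htmem m hm
    show (μ m).bind η = none
    rw [hmn]
    rfl
  funext n
  rw [hmap_def]
  show _ = (hmap μ n).bind (hmap η)
  by_cases htn : t ≤ (n : ℕ)
  · rw [if_pos htn]
    have h1 : (μ n).bind η ≠ none := htmem n htn
    have h2 : μ n ≠ none := by
      intro hx; rw [hx] at h1; exact h1 rfl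
    obtain ⟨p, hp⟩ := Option.ne_none_iff_exists'.mp h2
    have hpv := hd hp
    obtain ⟨u, hu⟩ : ∃ u : ℕ, u = max t 1 := ⟨_, rfl⟩
    have hut : t ≤ u := by omega
    have hu1 : 1 ≤ u := by omega
    have huc : u = t ∨ u = 1 := by omega
    set M : ℕ := ((u : ℤ) + d).toNat with hMdef
    have hM : M ∈ tset η := by
      intro q hq hqn
      have hq' : ((M : ℕ) : ℤ) ≤ ((q : ℕ) : ℤ) := by exact_mod_cast hq
      have hq1 : 1 ≤ (q : ℕ) := q.2
      have hk1 : (1 : ℤ) ≤ ((q : ℕ) : ℤ) - d := by omega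
      have hkt : ((u : ℕ) : ℤ) ≤ ((q : ℕ) : ℤ) - d := by omega
      set kk : ℕ+ := ⟨(((q : ℕ) : ℤ) - d).toNat, by omega⟩ with hkk
      have hkcoe : ((kk : ℕ) : ℤ) = ((q : ℕ) : ℤ) - d := by
        show (((((q : ℕ) : ℤ) - d).toNat : ℕ) : ℤ) = _
        omega
      have h3 : (μ kk).bind η ≠ none := htmem kk (by omega)
      have h4 : μ kk ≠ none := by intro hx; rw [hx] at h3; exact h3 rfl
      obtain ⟨r, hr⟩ := Option.ne_none_iff_exists'.mp h4
      have hrv := hd hr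
      have hrq : r = q := by
        apply PNat.coe_injective
        exact_mod_cast (show ((r : ℕ) : ℤ) = ((q : ℕ) : ℤ) by omega)
      rw [hr, hrq] at h3
      exact h3 hqn
    have htηM : tη ≤ M := Nat.sInf_le hM
    have hpM : M ≤ (p : ℕ) := by
      have hn1 : 1 ≤ (n : ℕ) := n.2
      have hun : u ≤ (n : ℕ) := by omega
      omega
    show (μ n).bind η = (hmap μ n).bind (hmap η)
    rw [hmap_def μ n, if_pos (le_trans htμt htn), hp]
    show η p = hmap η p
    rw [hmap_def η p, if_pos (le_trans htηM hpM)]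
  · rw [if_neg htn]
    symm
    rw [hmap_def]
    split_ifs with h1
    · have h2 : ∀ x, hmap η x = if tη ≤ (x : ℕ) then η x else none := hmap_def η
      rcases hx : μ n with _ | p
      · rfl
      · show hmap η p = none
        rw [h2 p]
        split_ifs with h3
        · rcases hy : η p with _ | a
          · rfl
          · exfalso
            apply htn
            apply Nat.sInf_le
            intro m hm hmn
            have h4 : μ m ≠ none := hμmem m (by omega)
            obtain ⟨q, hq⟩ := Option.ne_none_iff_exists'.mp h4
            have hqv := hd hq
            have hpv := hd hx
            have h5 : η q ≠ none := by
              apply hηmem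
              have : ((tη : ℕ) : ℤ) ≤ ((q : ℕ) : ℤ) := by
                have : ((tη : ℕ) : ℤ) ≤ ((p : ℕ) : ℤ) := by exact_mod_cast h3
                have : ((n : ℕ) : ℤ) ≤ ((m : ℕ) : ℤ) := by exact_mod_cast hm
                omega
              exact_mod_cast this
            apply h5
            rw [show (pmul η μ) m = (μ m).bind η from rfl, hq] at hmn
            exact hmn
        · rfl
    · rfl

/-- The map `𝔥 : 𝐈ℕ∞ → 𝐈ℕ∞`, sending each `η` to its restriction to
the tail `{n : n ≥ n_η^d}` where `n_η^d` is least such that every `n ≥ n_η^d` lies in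
`dom η`, is a monoid homomorphism whose image is the submonoid `𝒞_ℕ`; it fixes every
element of `𝒞_ℕ` (and only those), so `𝒞_ℕ` is a homomorphic retract of `𝐈ℕ∞`. -/
theorem stmt15 :
    (∀ η, InIN η → ∃ N : ℕ+,
        (∀ n : ℕ+, N ≤ n → η n ≠ none) ∧
        (∀ M : ℕ+, (∀ n : ℕ+, M ≤ n → η n ≠ none) → N ≤ M) ∧
        hmap η = fun (n : ℕ+) => if (N : ℕ) ≤ (n : ℕ) then η n else none) ∧
    (∀ η μ, InIN η → InIN μ → hmap (pmul η μ) = pmul (hmap η) (hmap μ)) ∧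
    (hmap pid = pid) ∧
    (∀ η, InIN η → InIN (hmap η) ∧ InC (hmap η)) ∧
    (∀ f, InC f → hmap f = f) ∧
    (∀ η, InIN η → hmap η = η → InC η) := by
  refine ⟨?_, fun η μ hη hμ => hmap_mul hη hμ, hmap_pid, ?_, ?_, ?_⟩
  · intro η hη
    have hmem : sInf (tset η) ∈ tset η := Nat.sInf_mem (tset_nonempty hη)
    set t := sInf (tset η) with ht
    refine ⟨⟨max t 1, by omega⟩, fun n hn => ?_, fun M hM => ?_, ?_⟩
    · apply hmem
      have h1 : max t 1 ≤ (n : ℕ) := hn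
      omega
    · show max t 1 ≤ (M : ℕ)
      have h1 : t ≤ (M : ℕ) := Nat.sInf_le (fun m hm => hM m hm)
      have h2 : 1 ≤ (M : ℕ) := M.2
      omega
    · funext n
      rw [hmap_def]
      show (if t ≤ (n : ℕ) then η n else none) = if max t 1 ≤ (n : ℕ) then η n else none
      have h2 : 1 ≤ (n : ℕ) := n.2
      exact if_congr (by omega) rfl rfl
  · intro η hη
    obtain ⟨c, hcanon⟩ := hmap_canon hη
    exact ⟨inIN_of_canon hcanon, inC_of_canon hcanon⟩
  · intro f hf
    obtain ⟨k, c, h⟩ := canon_of_inC hf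
    exact hmap_fix_of_canon h
  · intro η hη heq
    obtain ⟨c, hcanon⟩ := hmap_canon hη
    exact heq ▸ inC_of_canon hcanon
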